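/- arXiv:2402.14697 — 2 statements merged into one kernel-verified Lean document; each statement's English description precedes it below -/
import Mathlib

section
/- Let S_{U,0} be the linear span of S_U and ψ₀ in ℂ³ ⊗ ℂ³. Then the set of one-dimensional subspaces of S_{U,0} spanned by product vectors has exactly 6 elements, namely those spanned by: ψ₀ = |0⟩ ⊗ (|0⟩ − |1⟩); (|0⟩ − |1⟩) ⊗ |1⟩; (|0⟩ + |1⟩) ⊗ (|1⟩ − |2⟩); (|0⟩ + |1⟩ − 2|2⟩) ⊗ (|1⟩ + |2⟩); (2|0⟩ − |1⟩ − |2⟩) ⊗ |0⟩; and (|0⟩ + |1⟩ + |2⟩) ⊗ (2|0⟩ − |1⟩ − |2⟩). In particular, every product vector in S_{U,0} is a scalar multiple of one of these six vectors. -/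
noncomputable section

abbrev H3 : Type := EuclideanSpace ℂ (Fin 3)
abbrev H33 : Type := EuclideanSpace ℂ (Fin 3 × Fin 3)

/-- standard basis vector of ℂ³ -/
def ket3 (i : Fin 3) : H3 := EuclideanSpace.single i 1

/-- elementary tensor of two vectors of ℂ³, viewed in ℂ³ ⊗ ℂ³ ≅ ℂ⁹ -/
def tp (u v : H3) : H33 := WithLp.toLp 2 (fun p : Fin 3 × Fin 3 => u p.1 * v p.2)

/-- a product vector in ℂ³ ⊗ ℂ³ -/
def IsProdVec (ξ : H33) : Prop := ∃ u v : H3, ξ = tp u v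

/-- the set of one-dimensional subspaces of `T` spanned by (nonzero) product vectors -/
def prodLines (T : Submodule ℂ H33) : Set (Submodule ℂ H33) :=
  {L | ∃ ξ : H33, ξ ≠ 0 ∧ ξ ∈ T ∧ IsProdVec ξ ∧ L = Submodule.span ℂ {ξ}}

def ψ₀ : H33 := (Real.sqrt 2 : ℂ)⁻¹ • tp (ket3 0) (ket3 0 - ket3 1)
def ψ₁ : H33 := (Real.sqrt 2 : ℂ)⁻¹ • tp (ket3 2) (ket3 1 - ket3 2)
def ψ₂ : H33 := (Real.sqrt 2 : ℂ)⁻¹ • tp (ket3 0 - ket3 1) (ket3 2)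
def ψ₃ : H33 := (Real.sqrt 2 : ℂ)⁻¹ • tp (ket3 2 - ket3 1) (ket3 0)
def ψ₄ : H33 := (3 : ℂ)⁻¹ • tp (ket3 0 + ket3 1 + ket3 2) (ket3 0 + ket3 1 + ket3 2)

/-- the span of the TILES unextendible product basis -/
def U33 : Submodule ℂ H33 := Submodule.span ℂ {ψ₀, ψ₁, ψ₂, ψ₃, ψ₄}

/-- the orthogonal complement of the span of the TILES UPB -/
def SU : Submodule ℂ H33 := U33ᗮ

/-- the perturbation of `S_U` by `ψ₀` -/
def SU0 : Submodule ℂ H33 := SU ⊔ Submodule.span ℂ {ψ₀}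

/-! ### Auxiliary lemmas -/

local notation "ip" => @inner ℂ H33 _

lemma sqrt2_ne : ((Real.sqrt 2 : ℝ) : ℂ)⁻¹ ≠ 0 := by
  simp [Real.sqrt_eq_zero']

lemma inner1 (ξ : H33) : ip ψ₁ ξ = (Real.sqrt 2 : ℂ)⁻¹ * (ξ (2,1) - ξ (2,2)) := by
  simp [PiLp.inner_apply, Fintype.sum_prod_type, Fin.sum_univ_three, ψ₁, tp, ket3,
    EuclideanSpace.single_apply, Complex.conj_ofReal, map_inv₀]
  ring

lemma inner2 (ξ : H33) : ip ψ₂ ξ = (Real.sqrt 2 : ℂ)⁻¹ * (ξ (0,2) - ξ (1,2)) := by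
  simp [PiLp.inner_apply, Fintype.sum_prod_type, Fin.sum_univ_three, ψ₂, tp, ket3,
    EuclideanSpace.single_apply, Complex.conj_ofReal, map_inv₀]
  ring

lemma inner3 (ξ : H33) : ip ψ₃ ξ = (Real.sqrt 2 : ℂ)⁻¹ * (ξ (2,0) - ξ (1,0)) := by
  simp [PiLp.inner_apply, Fintype.sum_prod_type, Fin.sum_univ_three, ψ₃, tp, ket3,
    EuclideanSpace.single_apply, Complex.conj_ofReal, map_inv₀]
  ring

lemma inner4 (ξ : H33) : ip ψ₄ ξ = (3 : ℂ)⁻¹ *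
    (ξ (0,0) + ξ (0,1) + ξ (0,2) + ξ (1,0) + ξ (1,1) + ξ (1,2) + ξ (2,0) + ξ (2,1) + ξ (2,2)) := by
  simp [PiLp.inner_apply, Fintype.sum_prod_type, Fin.sum_univ_three, ψ₄, tp, ket3,
    EuclideanSpace.single_apply, map_inv₀, map_ofNat]
  ring

lemma inner0 (ξ : H33) : ip ψ₀ ξ = (Real.sqrt 2 : ℂ)⁻¹ * (ξ (0,0) - ξ (0,1)) := by
  simp [PiLp.inner_apply, Fintype.sum_prod_type, Fin.sum_univ_three, ψ₀, tp, ket3,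
    EuclideanSpace.single_apply, Complex.conj_ofReal, map_inv₀]
  ring

lemma psi0_coord : ψ₀ (0,0) = (Real.sqrt 2 : ℂ)⁻¹ ∧ ψ₀ (0,1) = -(Real.sqrt 2 : ℂ)⁻¹ ∧
    ψ₀ (0,2) = 0 ∧ ψ₀ (1,0) = 0 ∧ ψ₀ (1,1) = 0 ∧ ψ₀ (1,2) = 0 ∧ ψ₀ (2,0) = 0 ∧
    ψ₀ (2,1) = 0 ∧ ψ₀ (2,2) = 0 := by
  refine ⟨?_, ?_, ?_, ?_, ?_, ?_, ?_, ?_, ?_⟩ <;>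
    simp [ψ₀, tp, ket3, EuclideanSpace.single_apply]

lemma inner00 : ip ψ₀ ψ₀ = 1 := by
  have h2 : ((Real.sqrt 2 : ℝ) : ℂ) ^ 2 = 2 := by
    rw [← Complex.ofReal_pow, Real.sq_sqrt (by norm_num : (0:ℝ) ≤ 2)]
    norm_num
  have hne : ((Real.sqrt 2 : ℝ) : ℂ) ≠ 0 := by
    intro h; exact sqrt2_ne (by simp [h])
  rw [inner0, psi0_coord.1, psi0_coord.2.1]
  field_simp
  linear_combination -h2

lemma inner10 : ip ψ₁ ψ₀ = 0 := by
  rw [inner1, psi0_coord.2.2.2.2.2.2.2.1, psi0_coord.2.2.2.2.2.2.2.2]; ring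
lemma inner20 : ip ψ₂ ψ₀ = 0 := by
  rw [inner2, psi0_coord.2.2.1, psi0_coord.2.2.2.2.2.1]; ring
lemma inner30 : ip ψ₃ ψ₀ = 0 := by
  rw [inner3, psi0_coord.2.2.2.2.2.2.1, psi0_coord.2.2.2.1]; ring
lemma inner40 : ip ψ₄ ψ₀ = 0 := by
  obtain ⟨a,b,c,d,e,f,g,h,i⟩ := psi0_coord
  rw [inner4, a,b,c,d,e,f,g,h,i]; ring

def Eqs (ξ : H33) : Prop :=
  ξ (2,1) = ξ (2,2) ∧ ξ (0,2) = ξ (1,2) ∧ ξ (2,0) = ξ (1,0) ∧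
  ξ (0,0) + ξ (0,1) + ξ (0,2) + ξ (1,0) + ξ (1,1) + ξ (1,2) + ξ (2,0) + ξ (2,1) + ξ (2,2) = 0

lemma eqs_iff (ξ : H33) : Eqs ξ ↔ (ip ψ₁ ξ = 0 ∧ ip ψ₂ ξ = 0 ∧ ip ψ₃ ξ = 0 ∧ ip ψ₄ ξ = 0) := by
  have h3 : (3:ℂ)⁻¹ ≠ 0 := by norm_num
  rw [inner1, inner2, inner3, inner4, mul_eq_zero, mul_eq_zero, mul_eq_zero, mul_eq_zero,
    or_iff_right sqrt2_ne, or_iff_right sqrt2_ne, or_iff_right sqrt2_ne, or_iff_right h3,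
    sub_eq_zero, sub_eq_zero, sub_eq_zero]
  exact Iff.rfl

lemma mem_SU0_iff (ξ : H33) : ξ ∈ SU0 ↔ Eqs ξ := by
  constructor
  · intro hξ
    rw [eqs_iff]
    have key : ∀ ψ : H33, ψ ∈ U33 → ip ψ ψ₀ = 0 → ip ψ ξ = 0 := by
      intro ψ hψU hψ0
      have h1 : SU0 ≤ (Submodule.span ℂ {ψ})ᗮ := by
        apply sup_le
        · exact Submodule.orthogonal_le (by
            rw [Submodule.span_le]; simpa using hψU)
        · rw [Submodule.span_le]
          intro x hx
          rcases hx with rfl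
          rw [SetLike.mem_coe, Submodule.mem_orthogonal]
          intro u hu
          rcases Submodule.mem_span_singleton.mp hu with ⟨c, rfl⟩
          rw [inner_smul_left, hψ0, mul_zero]
      have := h1 hξ
      rw [Submodule.mem_orthogonal] at this
      exact this ψ (Submodule.mem_span_singleton_self ψ)
    have memU : ∀ i ∈ ({ψ₀, ψ₁, ψ₂, ψ₃, ψ₄} : Set H33), i ∈ U33 :=
      fun i hi => Submodule.subset_span hi
    exact ⟨key ψ₁ (memU ψ₁ (by simp)) inner10, key ψ₂ (memU ψ₂ (by simp)) inner20,
      key ψ₃ (memU ψ₃ (by simp)) inner30, key ψ₄ (memU ψ₄ (by simp)) inner40⟩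
  · intro hE
    rw [eqs_iff] at hE
    obtain ⟨h1, h2, h3, h4⟩ := hE
    set c : ℂ := ip ψ₀ ξ with hc
    have hz : ξ - c • ψ₀ ∈ SU := by
      rw [SU, Submodule.mem_orthogonal]
      intro u hu
      induction hu using Submodule.span_induction with
      | mem x hx =>
        have key : ∀ ψ : H33, ip ψ ξ = 0 → ip ψ ψ₀ = 0 → ip ψ (ξ - c • ψ₀) = 0 := by
          intro ψ hξ0 hψ0
          rw [inner_sub_right, inner_smul_right, hξ0, hψ0, mul_zero, sub_zero]
        rcases hx with rfl | rfl | rfl | rfl | rfl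
        · rw [inner_sub_right, inner_smul_right, inner00, mul_one, ← hc, sub_self]
        · exact key _ h1 inner10
        · exact key _ h2 inner20
        · exact key _ h3 inner30
        · exact key _ h4 inner40
      | zero => rw [inner_zero_left]
      | add x y _ _ hx hy => rw [inner_add_left, hx, hy, add_zero]
      | smul a x _ hx => rw [inner_smul_left, hx, mul_zero]
    have hxi : ξ = (ξ - c • ψ₀) + c • ψ₀ := by abel
    rw [hxi]
    exact Submodule.add_mem_sup hz (Submodule.smul_mem _ c (Submodule.mem_span_singleton_self ψ₀))

lemma classify (a0 a1 a2 b0 b1 b2 : ℂ)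
    (h1 : a2*b1 = a2*b2) (h2 : a0*b2 = a1*b2) (h3 : a2*b0 = a1*b0)
    (h4 : (a0+a1+a2)*(b0+b1+b2) = 0)
    (hu : ¬(a0 = 0 ∧ a1 = 0 ∧ a2 = 0)) (hv : ¬(b0 = 0 ∧ b1 = 0 ∧ b2 = 0)) :
    ∃ s t : ℂ, s ≠ 0 ∧ t ≠ 0 ∧
    ((a0 = s ∧ a1 = 0 ∧ a2 = 0 ∧ b0 = t ∧ b1 = -t ∧ b2 = 0) ∨
     (a0 = s ∧ a1 = -s ∧ a2 = 0 ∧ b0 = 0 ∧ b1 = t ∧ b2 = 0) ∨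
     (a0 = s ∧ a1 = s ∧ a2 = 0 ∧ b0 = 0 ∧ b1 = t ∧ b2 = -t) ∨
     (a0 = s ∧ a1 = s ∧ a2 = -2*s ∧ b0 = 0 ∧ b1 = t ∧ b2 = t) ∨
     (a0 = 2*s ∧ a1 = -s ∧ a2 = -s ∧ b0 = t ∧ b1 = 0 ∧ b2 = 0) ∨
     (a0 = s ∧ a1 = s ∧ a2 = s ∧ b0 = 2*t ∧ b1 = -t ∧ b2 = -t)) := by
  rcases mul_eq_zero.mp h4 with hS | hT
  · by_cases hb : b1 = b2
    · by_cases hb2 : b2 = 0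
      · -- E
        have hb1 : b1 = 0 := hb.trans hb2
        have hb0 : b0 ≠ 0 := fun h => hv ⟨h, hb1, hb2⟩
        have ha12 : a2 = a1 := mul_right_cancel₀ hb0 h3
        have ha1 : a1 ≠ 0 := by
          intro h
          exact hu ⟨by linear_combination hS - ha12 - 2*h, h, by linear_combination ha12 + h⟩
        exact ⟨-a1, b0, neg_ne_zero.mpr ha1, hb0, Or.inr (Or.inr (Or.inr (Or.inr (Or.inl
          ⟨by linear_combination hS - ha12, by ring, by linear_combination ha12, rfl, hb1, hb2⟩))))⟩
      · have ha01 : a0 = a1 := mul_right_cancel₀ hb2 h2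
        by_cases ha12 : a1 = a2
        · exfalso
          apply hu
          have h0 : a0 = 0 := by
            linear_combination (1/3 : ℂ)*hS + (2/3 : ℂ)*ha01 + (1/3 : ℂ)*ha12
          exact ⟨h0, by linear_combination h0 - ha01, by linear_combination h0 - ha01 - ha12⟩
        · -- D
          have hb0 : b0 = 0 := by
            rcases mul_eq_zero.mp (show (a2 - a1)*b0 = 0 by linear_combination h3) with h | h
            · exact absurd (by linear_combination -h) ha12
            · exact h
          have hb1 : b1 ≠ 0 := fun h => hv ⟨hb0, h, hb.symm.trans h⟩
          have ha0 : a0 ≠ 0 := by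
            intro h
            have h1' : a1 = 0 := by linear_combination -ha01 + h
            exact hu ⟨h, h1', by linear_combination hS - h - h1'⟩
          exact ⟨a0, b1, ha0, hb1, Or.inr (Or.inr (Or.inr (Or.inl
            ⟨rfl, ha01.symm, by linear_combination hS + ha01, hb0, rfl, hb.symm⟩)))⟩
    · -- B
      have ha2 : a2 = 0 := by
        rcases mul_eq_zero.mp (show a2*(b1 - b2) = 0 by linear_combination h1) with h | h
        · exact h
        · exact absurd (by linear_combination h) hb
      have ha1 : a1 = -a0 := by linear_combination hS - ha2
      have ha0 : a0 ≠ 0 := by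
        intro h; exact hu ⟨h, by linear_combination ha1 - h, ha2⟩
      have hb2 : b2 = 0 := by
        rcases mul_eq_zero.mp (show (2*a0)*b2 = 0 by linear_combination h2 + b2*ha1) with h | h
        · exact absurd (by linear_combination (1/2 : ℂ)*h) ha0
        · exact h
      have hb0 : b0 = 0 := by
        rcases mul_eq_zero.mp (show a0*b0 = 0 by linear_combination h3 - b0*ha2 + b0*ha1) with h | h
        · exact absurd h ha0
        · exact h
      have hb1 : b1 ≠ 0 := fun h => hv ⟨hb0, h, hb2⟩
      exact ⟨a0, b1, ha0, hb1, Or.inr (Or.inl ⟨rfl, ha1, ha2, hb0, rfl, hb2⟩)⟩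
  · by_cases hb : b1 = b2
    · -- F
      have hb1 : b1 ≠ 0 := by
        intro h
        exact hv ⟨by linear_combination hT + hb - 2*h, h, by linear_combination h - hb⟩
      have hb0 : b0 ≠ 0 := by
        intro h
        apply hb1
        linear_combination (1/2 : ℂ)*hT + (1/2 : ℂ)*hb - (1/2 : ℂ)*h
      have hb2' : b2 ≠ 0 := fun h => hb1 (hb.trans h)
      have ha01 : a0 = a1 := mul_right_cancel₀ hb2' h2
      have ha21 : a2 = a1 := mul_right_cancel₀ hb0 h3
      have ha1 : a1 ≠ 0 := by
        intro h; exact hu ⟨ha01.trans h, h, ha21.trans h⟩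
      exact ⟨a1, -b1, ha1, neg_ne_zero.mpr hb1, Or.inr (Or.inr (Or.inr (Or.inr (Or.inr
        ⟨ha01, rfl, ha21, by linear_combination hT + hb, by ring, by linear_combination -hb⟩))))⟩
    · have ha2 : a2 = 0 := by
        rcases mul_eq_zero.mp (show a2*(b1 - b2) = 0 by linear_combination h1) with h | h
        · exact h
        · exact absurd (by linear_combination h) hb
      by_cases ha1 : a1 = 0
      · -- A
        have ha0 : a0 ≠ 0 := fun h => hu ⟨h, ha1, ha2⟩
        have hb2 : b2 = 0 := by
          rcases mul_eq_zero.mp (show a0*b2 = 0 by linear_combination h2 + b2*ha1) with h | h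
          · exact absurd h ha0
          · exact h
        have hb0 : b0 ≠ 0 := by
          intro h
          exact hv ⟨h, by linear_combination hT - h - hb2, hb2⟩
        exact ⟨a0, b0, ha0, hb0, Or.inl ⟨rfl, ha1, ha2, rfl, by linear_combination hT - hb2, hb2⟩⟩
      · -- C
        have hb0 : b0 = 0 := by
          rcases mul_eq_zero.mp (show a1*b0 = 0 by linear_combination -h3 + b0*ha2) with h | h
          · exact absurd h ha1
          · exact h
        have hb2 : b2 = -b1 := by linear_combination hT - hb0
        have hb1 : b1 ≠ 0 := by
          intro h
          exact hv ⟨hb0, h, by linear_combination hb2 - h⟩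
        have hb2' : b2 ≠ 0 := by
          intro h; apply hb1; linear_combination hb2 - h
        have ha01 : a0 = a1 := mul_right_cancel₀ hb2' h2
        have ha0 : a0 ≠ 0 := fun h => ha1 (ha01.symm.trans h)
        exact ⟨a0, b1, ha0, hb1, Or.inr (Or.inr (Or.inl ⟨rfl, ha01.symm, ha2, hb0, rfl, hb2⟩))⟩

lemma tp_smul (s t : ℂ) (u v : H3) : tp (s • u) (t • v) = (s*t) • tp u v := by
  ext p
  simp [tp]
  ring

lemma span_eq_of (u v x y : H3) (s t : ℂ) (hs : s ≠ 0) (ht : t ≠ 0)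
    (hx : u = s • x) (hy : v = t • y) :
    Submodule.span ℂ {tp u v} = Submodule.span ℂ {tp x y} := by
  rw [hx, hy, tp_smul]
  exact Submodule.span_singleton_smul_eq ((mul_ne_zero hs ht).isUnit) _

lemma span_ne_of (a b : H33) (p q : Fin 3 × Fin 3) (h : a p * b q ≠ a q * b p) :
    Submodule.span ℂ {a} ≠ Submodule.span ℂ {b} := by
  intro he
  obtain ⟨c, hc⟩ := Submodule.mem_span_singleton.mp (he ▸ Submodule.mem_span_singleton_self a)
  apply h
  rw [← hc]
  show (c * b p) * b q = (c * b q) * b p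
  ring

def w1 : H33 := tp (ket3 0) (ket3 0 - ket3 1)
def w2 : H33 := tp (ket3 0 - ket3 1) (ket3 1)
def w3 : H33 := tp (ket3 0 + ket3 1) (ket3 1 - ket3 2)
def w4 : H33 := tp (ket3 0 + ket3 1 - (2 : ℂ) • ket3 2) (ket3 1 + ket3 2)
def w5 : H33 := tp ((2 : ℂ) • ket3 0 - ket3 1 - ket3 2) (ket3 0)
def w6 : H33 := tp (ket3 0 + ket3 1 + ket3 2) ((2 : ℂ) • ket3 0 - ket3 1 - ket3 2)

lemma w_mem : w1 ∈ SU0 ∧ w2 ∈ SU0 ∧ w3 ∈ SU0 ∧ w4 ∈ SU0 ∧ w5 ∈ SU0 ∧ w6 ∈ SU0 := by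
  refine ⟨?_, ?_, ?_, ?_, ?_, ?_⟩ <;>
    rw [mem_SU0_iff] <;>
    refine ⟨?_, ?_, ?_, ?_⟩ <;>
    · simp [w1, w2, w3, w4, w5, w6, Eqs, tp, ket3, EuclideanSpace.single_apply]
      try ring

lemma w_ne : w1 ≠ 0 ∧ w2 ≠ 0 ∧ w3 ≠ 0 ∧ w4 ≠ 0 ∧ w5 ≠ 0 ∧ w6 ≠ 0 := by
  refine ⟨fun h => ?_, fun h => ?_, fun h => ?_, fun h => ?_, fun h => ?_, fun h => ?_⟩
  · have := congrFun (congrArg WithLp.ofLp h) (0,0)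
    simp [w1, tp, ket3, EuclideanSpace.single_apply] at this
  · have := congrFun (congrArg WithLp.ofLp h) (0,1)
    simp [w2, tp, ket3, EuclideanSpace.single_apply] at this
  · have := congrFun (congrArg WithLp.ofLp h) (0,1)
    simp [w3, tp, ket3, EuclideanSpace.single_apply] at this
  · have := congrFun (congrArg WithLp.ofLp h) (0,1)
    simp [w4, tp, ket3, EuclideanSpace.single_apply] at this
  · have := congrFun (congrArg WithLp.ofLp h) (0,0)
    simp [w5, tp, ket3, EuclideanSpace.single_apply] at this
  · have := congrFun (congrArg WithLp.ofLp h) (0,0)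
    simp [w6, tp, ket3, EuclideanSpace.single_apply] at this

set_option maxHeartbeats 1000000 in
theorem statement1 :
    prodLines SU0 =
      {Submodule.span ℂ {tp (ket3 0) (ket3 0 - ket3 1)},
       Submodule.span ℂ {tp (ket3 0 - ket3 1) (ket3 1)},
       Submodule.span ℂ {tp (ket3 0 + ket3 1) (ket3 1 - ket3 2)},
       Submodule.span ℂ {tp (ket3 0 + ket3 1 - (2 : ℂ) • ket3 2) (ket3 1 + ket3 2)},
       Submodule.span ℂ {tp ((2 : ℂ) • ket3 0 - ket3 1 - ket3 2) (ket3 0)},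
       Submodule.span ℂ {tp (ket3 0 + ket3 1 + ket3 2) ((2 : ℂ) • ket3 0 - ket3 1 - ket3 2)}} ∧
    (prodLines SU0).ncard = 6 := by
  have key : prodLines SU0 = ({Submodule.span ℂ {w1}, Submodule.span ℂ {w2},
      Submodule.span ℂ {w3}, Submodule.span ℂ {w4}, Submodule.span ℂ {w5},
      Submodule.span ℂ {w6}} : Set (Submodule ℂ H33)) := by
    apply Set.eq_of_subset_of_subset
    · rintro L ⟨ξ, hne, hmem, ⟨u, v, rfl⟩, rfl⟩
      rw [mem_SU0_iff] at hmem
      obtain ⟨e1, e2, e3, e4⟩ := hmem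
      simp only [tp] at e1 e2 e3 e4
      have hu : ¬(u 0 = 0 ∧ u 1 = 0 ∧ u 2 = 0) := by
        rintro ⟨f0, f1, f2⟩
        apply hne
        ext p
        have : u p.1 = 0 := by
          obtain ⟨i, j⟩ := p
          fin_cases i <;> assumption
        simp [tp, this]
      have hv : ¬(v 0 = 0 ∧ v 1 = 0 ∧ v 2 = 0) := by
        rintro ⟨f0, f1, f2⟩
        apply hne
        ext p
        have : v p.2 = 0 := by
          obtain ⟨i, j⟩ := p
          fin_cases j <;> assumption
        simp [tp, this]
      obtain ⟨s, t, hs, ht, hcase⟩ := classify (u 0) (u 1) (u 2) (v 0) (v 1) (v 2)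
        e1 e2 e3 (by linear_combination e4) hu hv
      rcases hcase with ⟨g1,g2,g3,g4,g5,g6⟩ | ⟨g1,g2,g3,g4,g5,g6⟩ | ⟨g1,g2,g3,g4,g5,g6⟩ |
        ⟨g1,g2,g3,g4,g5,g6⟩ | ⟨g1,g2,g3,g4,g5,g6⟩ | ⟨g1,g2,g3,g4,g5,g6⟩
      · have : Submodule.span ℂ {tp u v} = Submodule.span ℂ {w1} :=
          span_eq_of u v _ _ s t hs ht
            (by ext i; fin_cases i <;>
              simp [ket3, EuclideanSpace.single_apply, g1, g2, g3] <;> ring)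
            (by ext i; fin_cases i <;>
              simp [ket3, EuclideanSpace.single_apply, g4, g5, g6] <;> ring)
        rw [this]; exact Set.mem_insert _ _
      · have : Submodule.span ℂ {tp u v} = Submodule.span ℂ {w2} :=
          span_eq_of u v _ _ s t hs ht
            (by ext i; fin_cases i <;>
              simp [ket3, EuclideanSpace.single_apply, g1, g2, g3] <;> ring)
            (by ext i; fin_cases i <;>
              simp [ket3, EuclideanSpace.single_apply, g4, g5, g6] <;> ring)
        rw [this]
        simp only [Set.mem_insert_iff, Set.mem_singleton_iff]; tauto
      · have : Submodule.span ℂ {tp u v} = Submodule.span ℂ {w3} :=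
          span_eq_of u v _ _ s t hs ht
            (by ext i; fin_cases i <;>
              simp [ket3, EuclideanSpace.single_apply, g1, g2, g3] <;> ring)
            (by ext i; fin_cases i <;>
              simp [ket3, EuclideanSpace.single_apply, g4, g5, g6] <;> ring)
        rw [this]
        simp only [Set.mem_insert_iff, Set.mem_singleton_iff]; tauto
      · have : Submodule.span ℂ {tp u v} = Submodule.span ℂ {w4} :=
          span_eq_of u v _ _ s t hs ht
            (by ext i; fin_cases i <;>
              simp [ket3, EuclideanSpace.single_apply, g1, g2, g3] <;> ring)
            (by ext i; fin_cases i <;>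
              simp [ket3, EuclideanSpace.single_apply, g4, g5, g6] <;> ring)
        rw [this]
        simp only [Set.mem_insert_iff, Set.mem_singleton_iff]; tauto
      · have : Submodule.span ℂ {tp u v} = Submodule.span ℂ {w5} :=
          span_eq_of u v _ _ s t hs ht
            (by ext i; fin_cases i <;>
              simp [ket3, EuclideanSpace.single_apply, g1, g2, g3] <;> ring)
            (by ext i; fin_cases i <;>
              simp [ket3, EuclideanSpace.single_apply, g4, g5, g6] <;> ring)
        rw [this]
        simp only [Set.mem_insert_iff, Set.mem_singleton_iff]; tauto
      · have : Submodule.span ℂ {tp u v} = Submodule.span ℂ {w6} :=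
          span_eq_of u v _ _ s t hs ht
            (by ext i; fin_cases i <;>
              simp [ket3, EuclideanSpace.single_apply, g1, g2, g3] <;> ring)
            (by ext i; fin_cases i <;>
              simp [ket3, EuclideanSpace.single_apply, g4, g5, g6] <;> ring)
        rw [this]
        simp only [Set.mem_insert_iff, Set.mem_singleton_iff]; tauto
    · intro L hL
      obtain ⟨m1, m2, m3, m4, m5, m6⟩ := w_mem
      obtain ⟨n1, n2, n3, n4, n5, n6⟩ := w_ne
      simp only [Set.mem_insert_iff, Set.mem_singleton_iff] at hL
      rcases hL with rfl | rfl | rfl | rfl | rfl | rfl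
      · exact ⟨w1, n1, m1, ⟨_, _, rfl⟩, rfl⟩
      · exact ⟨w2, n2, m2, ⟨_, _, rfl⟩, rfl⟩
      · exact ⟨w3, n3, m3, ⟨_, _, rfl⟩, rfl⟩
      · exact ⟨w4, n4, m4, ⟨_, _, rfl⟩, rfl⟩
      · exact ⟨w5, n5, m5, ⟨_, _, rfl⟩, rfl⟩
      · exact ⟨w6, n6, m6, ⟨_, _, rfl⟩, rfl⟩
  constructor
  · exact key
  · rw [key]
    have d12 : Submodule.span ℂ {w1} ≠ Submodule.span ℂ {w2} :=
      span_ne_of _ _ (0,0) (0,1) (by norm_num [w1, w2, tp, ket3, EuclideanSpace.single_apply,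
          (show (0:Fin 3) ≠ 2 by decide), (show (1:Fin 3) ≠ 2 by decide), (show (2:Fin 3) ≠ 1 by decide)])
    have d13 : Submodule.span ℂ {w1} ≠ Submodule.span ℂ {w3} :=
      span_ne_of _ _ (0,0) (0,1) (by norm_num [w1, w3, tp, ket3, EuclideanSpace.single_apply,
          (show (0:Fin 3) ≠ 2 by decide), (show (1:Fin 3) ≠ 2 by decide), (show (2:Fin 3) ≠ 1 by decide)])
    have d14 : Submodule.span ℂ {w1} ≠ Submodule.span ℂ {w4} :=
      span_ne_of _ _ (0,0) (0,1) (by norm_num [w1, w4, tp, ket3, EuclideanSpace.single_apply,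
          (show (0:Fin 3) ≠ 2 by decide), (show (1:Fin 3) ≠ 2 by decide), (show (2:Fin 3) ≠ 1 by decide)])
    have d15 : Submodule.span ℂ {w1} ≠ Submodule.span ℂ {w5} :=
      span_ne_of _ _ (0,0) (0,1) (by norm_num [w1, w5, tp, ket3, EuclideanSpace.single_apply,
          (show (0:Fin 3) ≠ 2 by decide), (show (1:Fin 3) ≠ 2 by decide), (show (2:Fin 3) ≠ 1 by decide)])
    have d16 : Submodule.span ℂ {w1} ≠ Submodule.span ℂ {w6} :=
      span_ne_of _ _ (0,0) (0,1) (by norm_num [w1, w6, tp, ket3, EuclideanSpace.single_apply,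
          (show (0:Fin 3) ≠ 2 by decide), (show (1:Fin 3) ≠ 2 by decide), (show (2:Fin 3) ≠ 1 by decide)])
    have d23 : Submodule.span ℂ {w2} ≠ Submodule.span ℂ {w3} :=
      span_ne_of _ _ (0,1) (0,2) (by norm_num [w2, w3, tp, ket3, EuclideanSpace.single_apply,
          (show (0:Fin 3) ≠ 2 by decide), (show (1:Fin 3) ≠ 2 by decide), (show (2:Fin 3) ≠ 1 by decide)])
    have d24 : Submodule.span ℂ {w2} ≠ Submodule.span ℂ {w4} :=
      span_ne_of _ _ (0,1) (0,2) (by norm_num [w2, w4, tp, ket3, EuclideanSpace.single_apply,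
          (show (0:Fin 3) ≠ 2 by decide), (show (1:Fin 3) ≠ 2 by decide), (show (2:Fin 3) ≠ 1 by decide)])
    have d25 : Submodule.span ℂ {w2} ≠ Submodule.span ℂ {w5} :=
      span_ne_of _ _ (0,0) (0,1) (by norm_num [w2, w5, tp, ket3, EuclideanSpace.single_apply,
          (show (0:Fin 3) ≠ 2 by decide), (show (1:Fin 3) ≠ 2 by decide), (show (2:Fin 3) ≠ 1 by decide)])
    have d26 : Submodule.span ℂ {w2} ≠ Submodule.span ℂ {w6} :=
      span_ne_of _ _ (0,0) (0,1) (by norm_num [w2, w6, tp, ket3, EuclideanSpace.single_apply,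
          (show (0:Fin 3) ≠ 2 by decide), (show (1:Fin 3) ≠ 2 by decide), (show (2:Fin 3) ≠ 1 by decide)])
    have d34 : Submodule.span ℂ {w3} ≠ Submodule.span ℂ {w4} :=
      span_ne_of _ _ (0,1) (0,2) (by norm_num [w3, w4, tp, ket3, EuclideanSpace.single_apply,
          (show (0:Fin 3) ≠ 2 by decide), (show (1:Fin 3) ≠ 2 by decide), (show (2:Fin 3) ≠ 1 by decide)])
    have d35 : Submodule.span ℂ {w3} ≠ Submodule.span ℂ {w5} :=
      span_ne_of _ _ (0,0) (0,1) (by norm_num [w3, w5, tp, ket3, EuclideanSpace.single_apply,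
          (show (0:Fin 3) ≠ 2 by decide), (show (1:Fin 3) ≠ 2 by decide), (show (2:Fin 3) ≠ 1 by decide)])
    have d36 : Submodule.span ℂ {w3} ≠ Submodule.span ℂ {w6} :=
      span_ne_of _ _ (0,0) (0,1) (by norm_num [w3, w6, tp, ket3, EuclideanSpace.single_apply,
          (show (0:Fin 3) ≠ 2 by decide), (show (1:Fin 3) ≠ 2 by decide), (show (2:Fin 3) ≠ 1 by decide)])
    have d45 : Submodule.span ℂ {w4} ≠ Submodule.span ℂ {w5} :=
      span_ne_of _ _ (0,0) (0,1) (by norm_num [w4, w5, tp, ket3, EuclideanSpace.single_apply,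
          (show (0:Fin 3) ≠ 2 by decide), (show (1:Fin 3) ≠ 2 by decide), (show (2:Fin 3) ≠ 1 by decide)])
    have d46 : Submodule.span ℂ {w4} ≠ Submodule.span ℂ {w6} :=
      span_ne_of _ _ (0,0) (0,1) (by norm_num [w4, w6, tp, ket3, EuclideanSpace.single_apply,
          (show (0:Fin 3) ≠ 2 by decide), (show (1:Fin 3) ≠ 2 by decide), (show (2:Fin 3) ≠ 1 by decide)])
    have d56 : Submodule.span ℂ {w5} ≠ Submodule.span ℂ {w6} :=
      span_ne_of _ _ (0,0) (0,1) (by norm_num [w5, w6, tp, ket3, EuclideanSpace.single_apply,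
          (show (0:Fin 3) ≠ 2 by decide), (show (1:Fin 3) ≠ 2 by decide), (show (2:Fin 3) ≠ 1 by decide)])
    rw [Set.ncard_insert_of_notMem (by
        simp only [Set.mem_insert_iff, Set.mem_singleton_iff]
        push_neg
        exact ⟨d12, d13, d14, d15, d16⟩) (Set.toFinite _)]
    rw [Set.ncard_insert_of_notMem (by
        simp only [Set.mem_insert_iff, Set.mem_singleton_iff]
        push_neg
        exact ⟨d23, d24, d25, d26⟩) (Set.toFinite _)]
    rw [Set.ncard_insert_of_notMem (by
        simp only [Set.mem_insert_iff, Set.mem_singleton_iff]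
        push_neg
        exact ⟨d34, d35, d36⟩) (Set.toFinite _)]
    rw [Set.ncard_insert_of_notMem (by
        simp only [Set.mem_insert_iff, Set.mem_singleton_iff]
        push_neg
        exact ⟨d45, d46⟩) (Set.toFinite _)]
    rw [Set.ncard_insert_of_notMem (by
        simp only [Set.mem_singleton_iff]
        exact d56) (Set.toFinite _)]
    rw [Set.ncard_singleton]
end
end

section
/- Let S_{U,0,4} be the linear span of S_U, ψ₀ and ψ₄ in ℂ³ ⊗ ℂ³. Then S_{U,0,4} contains infinitely many distinct one-dimensional subspaces spanned by product vectors; explicitly, for every t ∈ ℂ, the product vector |0⟩ ⊗ (|0⟩ + t|1⟩) lies in S_{U,0,4}. In particular, S_{U,0,4} is not a quasi-completely entangled subspace. -/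
noncomputable section

/-- the double perturbation of `S_U` by `ψ₀` and `ψ₄` -/
def SU04 : Submodule ℂ H33 := SU ⊔ Submodule.span ℂ {ψ₀} ⊔ Submodule.span ℂ {ψ₄}

open scoped InnerProductSpace ComplexConjugate

lemma inner_H33 (x y : H33) :
    ⟪x, y⟫_ℂ = ∑ i : Fin 3, ∑ j : Fin 3, conj (x (i,j)) * y (i,j) := by
  rw [PiLp.inner_apply, Fintype.sum_prod_type]
  simp [RCLike.inner_apply, mul_comm]

lemma hs2 : (Real.sqrt 2 : ℂ) * (Real.sqrt 2 : ℂ) = 2 := by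
  norm_cast
  rw [Real.mul_self_sqrt] <;> norm_num

lemma hsne : (Real.sqrt 2 : ℂ) ≠ 0 := by
  simp [Real.sqrt_eq_zero']

/-- the family of product vectors -/
def wv (t : ℂ) : H33 := tp (ket3 0) (ket3 0 + t • ket3 1)

lemma pvec_mem_SU (t : ℂ) :
    wv t - ((Real.sqrt 2 : ℂ)⁻¹ * (1 - t)) • ψ₀ - ((3:ℂ)⁻¹ * (1 + t)) • ψ₄ ∈ SU := by
  rw [SU, Submodule.mem_orthogonal]
  intro u hu
  rw [U33] at hu
  induction hu using Submodule.span_induction with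
  | mem x hx =>
    rcases hx with h | h | h | h | h <;> subst h <;>
      rw [inner_H33] <;>
      simp [wv, ψ₀, ψ₁, ψ₂, ψ₃, ψ₄, tp, ket3, EuclideanSpace.single_apply,
        Fin.sum_univ_three] <;>
      first
      | ring1
      | (field_simp; linear_combination (9 - 9*t) * hs2)
  | zero => simp
  | add x y _ _ hx hy => rw [inner_add_left, hx, hy, add_zero]
  | smul c x _ hx => rw [inner_smul_left, hx, mul_zero]

lemma wv_mem (t : ℂ) : wv t ∈ SU04 := by
  have hdecomp : wv t =
      (wv t - ((Real.sqrt 2 : ℂ)⁻¹ * (1 - t)) • ψ₀ - ((3:ℂ)⁻¹ * (1 + t)) • ψ₄)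
      + ((Real.sqrt 2 : ℂ)⁻¹ * (1 - t)) • ψ₀ + ((3:ℂ)⁻¹ * (1 + t)) • ψ₄ := by abel
  rw [hdecomp, SU04]
  refine Submodule.add_mem _ (Submodule.add_mem _ ?_ ?_) ?_
  · exact Submodule.mem_sup_left (Submodule.mem_sup_left (pvec_mem_SU t))
  · exact Submodule.mem_sup_left (Submodule.mem_sup_right
      (Submodule.smul_mem _ _ (Submodule.mem_span_singleton_self _)))
  · exact Submodule.mem_sup_right
      (Submodule.smul_mem _ _ (Submodule.mem_span_singleton_self _))

lemma wv_app (t : ℂ) (i j : Fin 3) :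
    wv t (i, j) = (if i = 0 then 1 else 0) * ((if j = 0 then 1 else 0) + t * (if j = 1 then 1 else 0)) := by
  simp [wv, tp, ket3, EuclideanSpace.single_apply, eq_comm]

lemma wv_ne (t : ℂ) : wv t ≠ 0 := by
  intro h
  have h0 := congrArg (fun f : H33 => f ((0 : Fin 3), (0 : Fin 3))) h
  rw [wv_app] at h0
  simp at h0

theorem statement15 :
    (∀ t : ℂ, tp (ket3 0) (ket3 0 + t • ket3 1) ∈ SU04) ∧
    (prodLines SU04).Infinite := by
  constructor
  · exact wv_mem
  · refine Set.infinite_of_injective_forall_mem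
      (f := fun t : ℂ => Submodule.span ℂ {wv t}) ?_ ?_
    · intro t s h
      have h' : Submodule.span ℂ {wv t} = Submodule.span ℂ {wv s} := h
      have hmem : wv s ∈ Submodule.span ℂ {wv t} := by
        rw [h']; exact Submodule.mem_span_singleton_self _
      obtain ⟨c, hc⟩ := Submodule.mem_span_singleton.mp hmem
      have h00 := congrFun (congrArg (fun f : H33 => (f : Fin 3 × Fin 3 → ℂ)) hc) (0, 0)
      have h01 := congrFun (congrArg (fun f : H33 => (f : Fin 3 × Fin 3 → ℂ)) hc) (0, 1)
      simp only [PiLp.smul_apply, smul_eq_mul, wv_app] at h00 h01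
      simp at h00 h01
      rw [h00] at h01
      simpa using h01
    · intro t
      exact ⟨wv t, wv_ne t, wv_mem t, ⟨_, _, rfl⟩, rfl⟩
end
end
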